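/- Let (V,g) be a real inner product space with orthogonal complex structure J and isometric real structure A with A² = id and AJ = −JA, and let R be the curvature tensor of the complex quadric, R(X,Y)Z = g(Y,Z)X − g(X,Z)Y + g(JY,Z)JX − g(JX,Z)JY − 2g(JX,Y)JZ + g(AY,Z)AX − g(AX,Z)AY + g(JAY,Z)JAX − g(JAX,Z)JAY. Suppose N is a unit vector such that N, JN, AN, JAN are pairwise orthonormal (N is 𝔄-isotropic). Then the normal Jacobi operator R_N : Z ↦ R(Z,N)N satisfies R_N Z = Z − g(Z,N)N + 3g(Z,JN)JN − g(Z,AN)AN − g(Z,JAN)JAN; in particular R_N is self-adjoint with eigenvalues 0, 1, 4, where the 0-eigenspace is span{N, AN, JAN}, the 4-eigenspace is span{JN}, and the 1-eigenspace is the orthogonal complement of span{N, JN, AN, JAN}. -/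

import Mathlib

open scoped RealInnerProductSpace

theorem stmt_5 {V : Type*} [NormedAddCommGroup V] [InnerProductSpace ℝ V]
    (J A : V →ₗ[ℝ] V)
    (hJiso : ∀ x y, ⟪J x, J y⟫ = ⟪x, y⟫) (hJ2 : ∀ x, J (J x) = -x)
    (hAiso : ∀ x y, ⟪A x, A y⟫ = ⟪x, y⟫) (hA2 : ∀ x, A (A x) = x)
    (hAJ : ∀ x, A (J x) = - J (A x))
    (R : V → V → V → V)
    (hR : ∀ X Y Z, R X Y Z =
      ⟪Y, Z⟫ • X - ⟪X, Z⟫ • Y + ⟪J Y, Z⟫ • J X - ⟪J X, Z⟫ • J Y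
        - (2 : ℝ) • (⟪J X, Y⟫ • J Z)
        + ⟪A Y, Z⟫ • A X - ⟪A X, Z⟫ • A Y
        + ⟪J (A Y), Z⟫ • J (A X) - ⟪J (A X), Z⟫ • J (A Y))
    (N : V) (hN : ‖N‖ = 1)
    (h1 : ⟪N, J N⟫ = 0) (h2 : ⟪N, A N⟫ = 0) (h3 : ⟪N, J (A N)⟫ = 0)
    (h4 : ⟪J N, A N⟫ = 0) (h5 : ⟪J N, J (A N)⟫ = 0) (h6 : ⟪A N, J (A N)⟫ = 0)
    (h7 : ‖J N‖ = 1) (h8 : ‖A N‖ = 1) (h9 : ‖J (A N)‖ = 1) :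
    (∀ Z, R Z N N = Z - ⟪Z, N⟫ • N + (3 : ℝ) • (⟪Z, J N⟫ • J N)
        - ⟪Z, A N⟫ • A N - ⟪Z, J (A N)⟫ • J (A N)) ∧
    (∀ Z W, ⟪R Z N N, W⟫ = ⟪Z, R W N N⟫) ∧
    (∀ Z, R Z N N = 0 ↔ Z ∈ Submodule.span ℝ ({N, A N, J (A N)} : Set V)) ∧
    (∀ Z, R Z N N = (4 : ℝ) • Z ↔ Z ∈ Submodule.span ℝ ({J N} : Set V)) ∧
    (∀ Z, ⟪Z, N⟫ = 0 → ⟪Z, J N⟫ = 0 → ⟪Z, A N⟫ = 0 → ⟪Z, J (A N)⟫ = 0 →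
      R Z N N = Z) := by
  have hJs : ∀ x y : V, ⟪J x, y⟫ = -⟪x, J y⟫ := by
    intro x y
    have := hJiso x (J y)
    rw [hJ2] at this
    simp [inner_neg_right] at this
    linarith
  have hAs : ∀ x y : V, ⟪A x, y⟫ = ⟪x, A y⟫ := by
    intro x y
    have := hAiso x (A y)
    rwa [hA2] at this
  have hNN : ⟪N, N⟫ = 1 := by rw [real_inner_self_eq_norm_sq, hN]; norm_num
  have hJNJN : ⟪J N, J N⟫ = 1 := by rw [real_inner_self_eq_norm_sq, h7]; norm_num
  have hANAN : ⟪A N, A N⟫ = 1 := by rw [real_inner_self_eq_norm_sq, h8]; norm_num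
  have hJANJAN : ⟪J (A N), J (A N)⟫ = 1 := by rw [real_inner_self_eq_norm_sq, h9]; norm_num
  have h1' : ⟪J N, N⟫ = 0 := (real_inner_comm N (J N)).trans h1
  have h2' : ⟪A N, N⟫ = 0 := (real_inner_comm N (A N)).trans h2
  have h3' : ⟪J (A N), N⟫ = 0 := (real_inner_comm N (J (A N))).trans h3
  have h4' : ⟪A N, J N⟫ = 0 := (real_inner_comm (J N) (A N)).trans h4
  have h5' : ⟪J (A N), J N⟫ = 0 := (real_inner_comm (J N) (J (A N))).trans h5
  have h6' : ⟪J (A N), A N⟫ = 0 := (real_inner_comm (A N) (J (A N))).trans h6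
  have hJZN : ∀ Z : V, ⟪J Z, N⟫ = -⟪Z, J N⟫ := fun Z => hJs Z N
  have hAZN : ∀ Z : V, ⟪A Z, N⟫ = ⟪Z, A N⟫ := fun Z => hAs Z N
  have hJAZN : ∀ Z : V, ⟪J (A Z), N⟫ = ⟪Z, J (A N)⟫ := by
    intro Z
    rw [hJs, hAs, hAJ, inner_neg_right, neg_neg]
  have hmain : ∀ Z, R Z N N = Z - ⟪Z, N⟫ • N + (3 : ℝ) • (⟪Z, J N⟫ • J N)
      - ⟪Z, A N⟫ • A N - ⟪Z, J (A N)⟫ • J (A N) := by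
    intro Z
    rw [hR, hNN, h1', h2', h3', hJZN, hAZN, hJAZN]
    module
  refine ⟨hmain, ?_, ?_, ?_, ?_⟩
  · intro Z W
    rw [hmain Z, hmain W]
    simp only [inner_sub_left, inner_sub_right, inner_add_left, inner_add_right,
      real_inner_smul_left, real_inner_smul_right,
      hNN, hJNJN, hANAN, hJANJAN, h1, h2, h3, h4, h5, h6, h1', h2', h3', h4', h5', h6',
      real_inner_comm W N, real_inner_comm W (J N),
      real_inner_comm W (A N), real_inner_comm W (J (A N)), real_inner_comm W Z]
    ring
  · intro Z
    constructor
    · intro h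
      have hz := hmain Z
      rw [h] at hz
      have hJN0 : ⟪Z, J N⟫ = 0 := by
        have t := congrArg (fun v => (inner ℝ v (J N) : ℝ)) hz
        simp only [inner_zero_left, inner_sub_left, inner_add_left, real_inner_smul_left,
          h1, hJNJN, h4', h5'] at t
        linarith
      have hZ : Z = ⟪Z, N⟫ • N + ⟪Z, A N⟫ • A N + ⟪Z, J (A N)⟫ • J (A N) := by
        rw [hJN0] at hz
        linear_combination (norm := module) (-1 : ℝ) • hz
      rw [hZ]
      refine Submodule.add_mem _ (Submodule.add_mem _ ?_ ?_) ?_ <;>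
        exact Submodule.smul_mem _ _ (Submodule.subset_span (by simp))
    · intro h
      induction h using Submodule.span_induction with
      | mem x hx =>
        rcases hx with rfl | rfl | rfl
        · rw [hmain, hNN, h1, h2, h3]; module
        · rw [hmain, h2', h4', hANAN, h6]; module
        · rw [hmain, h3', h5', h6', hJANJAN]; module
      | zero => rw [hmain]; simp
      | add x y _ _ hx hy =>
        rw [hmain] at hx hy ⊢
        rw [inner_add_left, inner_add_left, inner_add_left, inner_add_left]
        linear_combination (norm := module) hx + hy
      | smul a x _ hx =>
        rw [hmain] at hx ⊢
        rw [real_inner_smul_left, real_inner_smul_left, real_inner_smul_left,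
          real_inner_smul_left]
        linear_combination (norm := module) a • hx
  · intro Z
    constructor
    · intro h
      have hz := hmain Z
      rw [h] at hz
      have hN0 : ⟪Z, N⟫ = 0 := by
        have t := congrArg (fun v => (inner ℝ v N : ℝ)) hz
        simp only [inner_sub_left, inner_add_left, real_inner_smul_left,
          hNN, h1', h2', h3'] at t
        linarith
      have hA0 : ⟪Z, A N⟫ = 0 := by
        have t := congrArg (fun v => (inner ℝ v (A N) : ℝ)) hz
        simp only [inner_sub_left, inner_add_left, real_inner_smul_left,
          h2, h4, hANAN, h6'] at t
        linarith
      have hJA0 : ⟪Z, J (A N)⟫ = 0 := by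
        have t := congrArg (fun v => (inner ℝ v (J (A N)) : ℝ)) hz
        simp only [inner_sub_left, inner_add_left, real_inner_smul_left,
          h3, h5, h6, hJANJAN] at t
        linarith
      have hZ : Z = ⟪Z, J N⟫ • J N := by
        rw [hN0, hA0, hJA0] at hz
        linear_combination (norm := module) ((1 : ℝ)/3) • hz
      rw [hZ]
      exact Submodule.smul_mem _ _ (Submodule.subset_span (by simp))
    · intro h
      rw [Submodule.mem_span_singleton] at h
      obtain ⟨a, rfl⟩ := h
      rw [hmain, real_inner_smul_left, real_inner_smul_left, real_inner_smul_left,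
        real_inner_smul_left, h1', hJNJN, h4, h5]
      module
  · intro Z hz1 hz2 hz3 hz4
    rw [hmain, hz1, hz2, hz3, hz4]
    module
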